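/- Let X : ℝ^m → ℝ^m be a smooth vector field admitting a global flow φ : ℝ × ℝ^m → ℝ^m, and let z_e be an equilibrium: X(z_e) = 0. Let H, C₁, …, C_k : ℝ^m → ℝ be smooth functions conserved along X (dH(z)(X(z)) = 0 and dC_i(z)(X(z)) = 0 for all z), and let F : ℝ^m → ℝ be smooth with the strict inequality d((F − F(z_e))²)(z)(X(z)) < 0 for every z ≠ z_e. Assume there exist constants λ₀, λ₁, …, λ_k, μ such that G := λ₀H + λ₁C₁ + … + λ_kC_k + μF satisfies dG(z_e) = 0 and the Hessian of G at z_e is positive definite on W := ker dH(z_e) ∩ ker dC₁(z_e) ∩ … ∩ ker dC_k(z_e). Then z_e is asymptotically stable: there is a neighborhood V of z_e such that φ(t, V) ⊆ φ(s, V) whenever t > s, and for every neighborhood W' of z_e there exists T > 0 with φ(t, V) ⊆ W' for all t ≥ T. -/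

import Mathlib

/-- Strict-inequality case of the energy-Casimir theorem: with the notation of the
energy-Casimir theorem, if `d((F − F(ze))²)(z)(X(z)) < 0` for every `z ≠ ze` and the
combination `λ₀H + ΣλᵢCᵢ + μF` has a critical point at `ze` with Hessian positive definite
on `W = ker dH(ze) ∩ ⋂ᵢ ker dCᵢ(ze)`, then `ze` is asymptotically stable. -/
theorem stmt_5 (m k : ℕ)
    (X : (Fin m → ℝ) → (Fin m → ℝ)) (hX : ContDiff ℝ (⊤ : ℕ∞) X)
    (φ : ℝ → (Fin m → ℝ) → (Fin m → ℝ))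
    (hφ0 : ∀ z, φ 0 z = z)
    (hφadd : ∀ t s z, φ (t + s) z = φ t (φ s z))
    (hφderiv : ∀ t z, HasDerivAt (fun τ => φ τ z) (X (φ t z)) t)
    (ze : Fin m → ℝ) (hze : X ze = 0)
    (H : (Fin m → ℝ) → ℝ) (C : Fin k → (Fin m → ℝ) → ℝ) (F : (Fin m → ℝ) → ℝ)
    (hH : ContDiff ℝ (⊤ : ℕ∞) H) (hC : ∀ i, ContDiff ℝ (⊤ : ℕ∞) (C i))
    (hF : ContDiff ℝ (⊤ : ℕ∞) F)
    (hHcons : ∀ z, fderiv ℝ H z (X z) = 0)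
    (hCcons : ∀ i z, fderiv ℝ (C i) z (X z) = 0)
    (hFstrict : ∀ z, z ≠ ze → fderiv ℝ (fun y => (F y - F ze) ^ 2) z (X z) < 0)
    (lam₀ : ℝ) (lam : Fin k → ℝ) (mu : ℝ)
    (G : (Fin m → ℝ) → ℝ)
    (hG : G = fun z => lam₀ * H z + (∑ i, lam i * C i z) + mu * F z)
    (hcrit : fderiv ℝ G ze = 0)
    (hpos : ∀ v : Fin m → ℝ, v ≠ 0 → fderiv ℝ H ze v = 0 →
      (∀ i, fderiv ℝ (C i) ze v = 0) → 0 < fderiv ℝ (fderiv ℝ G) ze v v) :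
    ∃ V ∈ nhds ze,
      (∀ s t : ℝ, s < t → φ t '' V ⊆ φ s '' V) ∧
      (∀ W' ∈ nhds ze, ∃ T > (0 : ℝ), ∀ t ≥ T, φ t '' V ⊆ W') := by
  classical
  rcases Nat.eq_zero_or_pos m with hm | hm
  · -- trivial case: the space is a subsingleton
    subst hm
    haveI : Subsingleton (Fin 0 → ℝ) := ⟨fun a b => funext fun i => absurd i.2 (by omega)⟩
    refine ⟨Set.univ, Filter.univ_mem, ?_, ?_⟩
    · rintro s t _ x ⟨z, _, rfl⟩
      exact ⟨z, trivial, Subsingleton.elim _ _⟩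
    · intro W' hW'
      have hzeW : ze ∈ W' := mem_of_mem_nhds hW'
      exact ⟨1, one_pos, fun t _ => by
        rintro x ⟨z, _, rfl⟩
        exact (Subsingleton.elim (φ t z) ze) ▸ hzeW⟩
  haveI : Nonempty (Fin m) := Fin.pos_iff_nonempty.mp hm
  set L : (Fin m → ℝ) → ℝ := fun y => (F y - F ze) ^ 2 with hLdef
  have hLsmooth : ContDiff ℝ (⊤ : ℕ∞) L := (hF.sub contDiff_const).pow 2
  have hLdiff : Differentiable ℝ L := hLsmooth.differentiable (by simp)
  have hLcont : Continuous L := hLdiff.continuous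
  have hLze : L ze = 0 := by simp [hLdef]
  have hLnonneg : ∀ z, 0 ≤ L z := fun z => sq_nonneg _
  -- q z := dL(z)(X z)
  have hq_cont : Continuous fun z => fderiv ℝ L z (X z) :=
    (hLsmooth.continuous_fderiv (by simp)).clm_apply (hX.continuous)
  have hq_neg : ∀ z, z ≠ ze → fderiv ℝ L z (X z) < 0 := hFstrict
  have hq_nonpos : ∀ z, fderiv ℝ L z (X z) ≤ 0 := by
    intro z
    by_cases hzz : z = ze
    · subst hzz; rw [hze]; simp
    · exact le_of_lt (hq_neg z hzz)
  -- L is positive away from ze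
  have hLpos : ∀ z, z ≠ ze → 0 < L z := by
    intro z hzz
    rcases lt_or_eq_of_le (hLnonneg z) with h | h
    · exact h
    have hFz : F z - F ze = 0 := by
      have := h.symm
      simp only [hLdef] at this
      exact pow_eq_zero_iff (n := 2) (by norm_num) |>.mp this
    have h1 : HasFDerivAt (fun y => F y - F ze) (fderiv ℝ F z) z :=
      ((hF.differentiable (by simp) z).hasFDerivAt).sub_const _
    have h2 : HasFDerivAt L (0 : (Fin m → ℝ) →L[ℝ] ℝ) z := by
      have := HasFDerivAt.mul (𝕜 := ℝ) h1 h1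
      rw [hFz] at this
      simp only [zero_smul, zero_add, add_zero] at this
      have heq : ((fun y => F y - F ze) * fun y => F y - F ze) = L := by
        funext y; simp [hLdef, sq, Pi.mul_apply]
      rwa [heq] at this
    have hfz : fderiv ℝ L z = 0 := h2.fderiv
    have hneg := hq_neg z hzz
    rw [hfz] at hneg
    simp at hneg
  -- derivative of L along the flow
  have gderiv : ∀ z t, HasDerivAt (fun τ => L (φ τ z)) (fderiv ℝ L (φ t z) (X (φ t z))) t :=
    fun z t => ((hLdiff (φ t z)).hasFDerivAt).comp_hasDerivAt (f := fun τ => φ τ z) t (hφderiv t z)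
  have g_anti : ∀ z, Antitone fun τ => L (φ τ z) := by
    intro z
    refine antitone_of_deriv_nonpos (fun t => (gderiv z t).differentiableAt) fun t => ?_
    rw [(gderiv z t).deriv]
    exact hq_nonpos _
  have hφcont : ∀ z, Continuous fun t => φ t z := fun z =>
    continuous_iff_continuousAt.mpr fun t => (hφderiv t z).continuousAt
  -- minimum of L on the unit sphere
  have hsph : IsCompact (Metric.sphere ze 1) := isCompact_sphere ze 1
  have hsphne : (Metric.sphere ze 1).Nonempty := NormedSpace.sphere_nonempty.mpr zero_le_one
  obtain ⟨zc, hzc, hzcmin⟩ := hsph.exists_isMinOn hsphne hLcont.continuousOn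
  have hzcne : zc ≠ ze := by
    intro h
    rw [Metric.mem_sphere, h, dist_self] at hzc
    norm_num at hzc
  set c : ℝ := L zc with hcdef
  have hc0 : 0 < c := hLpos zc hzcne
  -- the invariant neighborhood
  set V : Set (Fin m → ℝ) := Metric.ball ze 1 ∩ {z | L z < c} with hVdef
  have hVnhds : V ∈ nhds ze := by
    refine IsOpen.mem_nhds (Metric.isOpen_ball.inter (isOpen_lt hLcont continuous_const)) ?_
    exact ⟨Metric.mem_ball_self one_pos, by simp [hLze, hc0]⟩
  have hLle : ∀ z, ∀ t : ℝ, 0 ≤ t → L (φ t z) ≤ L z := by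
    intro z t ht
    have := g_anti z ht
    simpa [hφ0] using this
  -- forward invariance of V
  have hinv : ∀ z ∈ V, ∀ τ : ℝ, 0 ≤ τ → φ τ z ∈ V := by
    rintro z ⟨hzb, hzc'⟩ τ hτ
    have hLτ : L (φ τ z) < c := lt_of_le_of_lt (hLle z τ hτ) hzc'
    refine ⟨?_, hLτ⟩
    by_contra hge
    rw [Metric.mem_ball] at hge
    push_neg at hge
    have hcontd : ContinuousOn (fun t => dist (φ t z) ze) (Set.Icc 0 τ) :=
      ((hφcont z).dist continuous_const).continuousOn
    have hIVT := intermediate_value_Icc hτ hcontd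
    have h1mem : (1 : ℝ) ∈ Set.Icc (dist (φ 0 z) ze) (dist (φ τ z) ze) := by
      rw [hφ0]
      exact ⟨le_of_lt (Metric.mem_ball.mp hzb), hge⟩
    obtain ⟨t₀, ht₀mem, ht₀⟩ := hIVT h1mem
    have hsphmem : φ t₀ z ∈ Metric.sphere ze 1 := by
      rw [Metric.mem_sphere]; exact ht₀
    have h1 : c ≤ L (φ t₀ z) := hzcmin hsphmem
    have h2 : L (φ t₀ z) ≤ L z := hLle z t₀ ht₀mem.1
    have : L z < c := hzc'
    linarith
  refine ⟨V, hVnhds, ?_, ?_⟩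
  · -- stability: images decrease
    rintro s t hst x ⟨z, hz, rfl⟩
    refine ⟨φ (t - s) z, hinv z hz _ (by linarith), ?_⟩
    have := hφadd s (t - s) z
    rw [show s + (t - s) = t by ring] at this
    exact this.symm
  · -- attraction
    intro W' hW'
    -- choose δ
    obtain ⟨δ, hδ0, hδ⟩ : ∃ δ > (0 : ℝ), ∀ z, dist z ze ≤ 1 → L z ≤ δ → z ∈ W' := by
      set B := Metric.closedBall ze 1 ∩ (interior W')ᶜ with hBdef
      have hBc : IsCompact B :=
        (isCompact_closedBall ze 1).inter_right isOpen_interior.isClosed_compl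
      rcases B.eq_empty_or_nonempty with hB | hB
      · refine ⟨1, one_pos, fun z hz1 _ => ?_⟩
        have hzB : z ∉ B := by rw [hB]; exact Set.notMem_empty z
        have : z ∈ interior W' := by
          by_contra hzi
          exact hzB ⟨Metric.mem_closedBall.mpr hz1, hzi⟩
        exact interior_subset this
      · obtain ⟨zb, hzbB, hzbmin⟩ := hBc.exists_isMinOn hB hLcont.continuousOn
        have hzbne : zb ≠ ze := by
          intro h
          exact hzbB.2 (h ▸ mem_interior_iff_mem_nhds.mpr hW')
        have hzbpos : 0 < L zb := hLpos zb hzbne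
        refine ⟨L zb / 2, by linarith, fun z hz1 hz2 => ?_⟩
        by_contra hzW
        have hzB : z ∈ B := by
          refine ⟨Metric.mem_closedBall.mpr hz1, fun hint => hzW (interior_subset hint)⟩
        have := hzbmin hzB
        simp only [Set.mem_setOf_eq] at this
        linarith
    -- choose ε
    set A := Metric.closedBall ze 1 ∩ {z | δ ≤ L z ∧ L z ≤ c} with hAdef
    have hAclosed : IsClosed {z : Fin m → ℝ | δ ≤ L z ∧ L z ≤ c} := by
      have h1 : IsClosed {z : Fin m → ℝ | δ ≤ L z} := isClosed_le continuous_const hLcont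
      have h2 : IsClosed {z : Fin m → ℝ | L z ≤ c} := isClosed_le hLcont continuous_const
      exact h1.inter h2
    have hAc : IsCompact A := (isCompact_closedBall ze 1).inter_right hAclosed
    obtain ⟨ε, hε0, hεA⟩ : ∃ ε > (0 : ℝ), ∀ z ∈ A, fderiv ℝ L z (X z) ≤ -ε := by
      rcases A.eq_empty_or_nonempty with hA | hA
      · exact ⟨1, one_pos, fun z hz => absurd (hA ▸ hz) (Set.notMem_empty z)⟩
      · obtain ⟨za, hzaA, hzamax⟩ := hAc.exists_isMaxOn hA hq_cont.continuousOn
        have hzane : za ≠ ze := by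
          intro h
          have := hzaA.2.1
          rw [h, hLze] at this
          linarith
        have hqa : fderiv ℝ L za (X za) < 0 := hq_neg za hzane
        refine ⟨-(fderiv ℝ L za (X za)), by linarith, fun z hz => ?_⟩
        have := hzamax hz
        simp only [Set.mem_setOf_eq] at this
        linarith
    refine ⟨c / ε + 1, by positivity, fun t ht => ?_⟩
    rintro x ⟨z, hzV, rfl⟩
    have hT0 : (0 : ℝ) ≤ c / ε + 1 := by positivity
    have ht0 : (0 : ℝ) ≤ t := le_trans hT0 ht
    -- there is a time in [0, T] where L drops below δ
    have key : ∃ t₀ ∈ Set.Icc (0 : ℝ) (c / ε + 1), L (φ t₀ z) < δ := by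
      by_contra hk
      push_neg at hk
      have hmemA : ∀ s ∈ Set.Icc (0 : ℝ) (c / ε + 1), φ s z ∈ A := by
        intro s hs
        refine ⟨Metric.mem_closedBall.mpr (le_of_lt (Metric.mem_ball.mp (hinv z hzV s hs.1).1)), hk s hs, ?_⟩
        exact le_of_lt (lt_of_le_of_lt (hLle z s hs.1) hzV.2)
      have hhd : ∀ s : ℝ, HasDerivAt (fun τ => L (φ τ z) + ε * τ)
          (fderiv ℝ L (φ s z) (X (φ s z)) + ε) s := by
        intro s
        have h1 := gderiv z s
        have h2 : HasDerivAt (fun τ : ℝ => ε * τ) ε s := by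
          simpa using (hasDerivAt_id s).const_mul ε
        exact h1.add h2
      have hanti : AntitoneOn (fun s => L (φ s z) + ε * s) (Set.Icc 0 (c / ε + 1)) := by
        refine antitoneOn_of_deriv_nonpos (convex_Icc _ _)
          (Continuous.continuousOn (by
            exact (Differentiable.continuous fun s => (hhd s).differentiableAt)))
          (fun s _ => ((hhd s).differentiableAt).differentiableWithinAt) ?_
        intro s hs
        rw [interior_Icc] at hs
        rw [(hhd s).deriv]
        have := hεA _ (hmemA s ⟨le_of_lt hs.1, le_of_lt hs.2⟩)
        linarith
      have h0mem : (0 : ℝ) ∈ Set.Icc (0 : ℝ) (c / ε + 1) := ⟨le_refl _, hT0⟩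
      have hTmem : (c / ε + 1) ∈ Set.Icc (0 : ℝ) (c / ε + 1) := ⟨hT0, le_refl _⟩
      have hfin := hanti h0mem hTmem hT0
      simp only [hφ0, mul_zero, add_zero] at hfin
      have hεT : ε * (c / ε + 1) = c + ε := by field_simp
      have hL0 : 0 ≤ L (φ (c / ε + 1) z) := hLnonneg _
      have hLzc : L z < c := hzV.2
      rw [hεT] at hfin
      linarith
    obtain ⟨t₀, ht₀mem, hlt⟩ := key
    have ht₀t : t₀ ≤ t := le_trans ht₀mem.2 ht
    have hmono : L (φ t z) ≤ L (φ t₀ z) := g_anti z ht₀t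
    refine hδ (φ t z) (le_of_lt (Metric.mem_ball.mp (hinv z hzV t ht0).1)) ?_
    exact le_of_lt (lt_of_le_of_lt hmono hlt)
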